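/- Let p > 3, g(t) = f₁(t)^{p+1}/t, and G(t) = ∫₀ᵗ g(s) ds. Then g satisfies the Keller–Osserman condition: ∫₁^∞ G(t)^{-1/2} dt < ∞. -/

import Mathlib

open Real Filter Set MeasureTheory

/-- `Fk κ t = ∫₀ᵗ √(1 + 2κ s²) ds`. -/
noncomputable def Fk (κ t : ℝ) : ℝ := ∫ s in (0:ℝ)..t, Real.sqrt (1 + 2*κ*s^2)

/-- `f` is the inverse of `Fk κ` on `[0,∞)`. -/
def IsInvF (κ : ℝ) (f : ℝ → ℝ) : Prop :=
  (∀ s, 0 ≤ s → f (Fk κ s) = s) ∧ ∀ t, 0 ≤ t → 0 ≤ f t ∧ Fk κ (f t) = t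

/-- The derivative formula `f_κ'(t) = (1 + 2κ f_κ(t)²)^{-1/2}`. -/
noncomputable def fd (κ : ℝ) (f : ℝ → ℝ) (t : ℝ) : ℝ :=
  1 / Real.sqrt (1 + 2*κ*(f t)^2)

private lemma cont1 : Continuous fun s : ℝ => Real.sqrt (1 + 2*1*s^2) :=
  Real.continuous_sqrt.comp (by continuity)

private lemma intInt (a b : ℝ) :
    IntervalIntegrable (fun s : ℝ => Real.sqrt (1 + 2*1*s^2)) MeasureTheory.volume a b :=
  cont1.intervalIntegrable a b

private lemma one_le_integrand (s : ℝ) : 1 ≤ Real.sqrt (1 + 2*1*s^2) := by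
  nth_rewrite 1 [show (1:ℝ) = Real.sqrt 1 from Real.sqrt_one.symm]
  apply Real.sqrt_le_sqrt; nlinarith [sq_nonneg s]

private lemma Fk_add (a b : ℝ) : Fk 1 b = Fk 1 a + ∫ s in a..b, Real.sqrt (1 + 2*1*s^2) := by
  rw [Fk, Fk, intervalIntegral.integral_add_adjacent_intervals (intInt 0 a) (intInt a b)]

private lemma Fk_gap {a b : ℝ} (hab : a ≤ b) : b - a ≤ Fk 1 b - Fk 1 a := by
  rw [Fk_add a b]
  have : ∫ s in a..b, (1:ℝ) ≤ ∫ s in a..b, Real.sqrt (1 + 2*1*s^2) := by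
    apply intervalIntegral.integral_mono_on hab intervalIntegrable_const (intInt a b)
    intro x _; exact one_le_integrand x
  simpa using this

private lemma Fk_strictMono : StrictMono (Fk 1) := by
  intro a b hab; have := Fk_gap hab.le; linarith

private lemma Fk_zero : Fk 1 0 = 0 := by simp [Fk]

private lemma le_Fk {s : ℝ} (hs : 0 ≤ s) : s ≤ Fk 1 s := by
  have := Fk_gap hs; rw [Fk_zero] at this; linarith

private lemma Fk_scale {s a : ℝ} (hs : 0 ≤ s) (ha : 1 ≤ a) : Fk 1 (a*s) ≤ a^2 * Fk 1 s := by
  have ha0 : (0:ℝ) < a := by linarith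
  have key : ∫ x in (0:ℝ)..s, Real.sqrt (1 + 2*1*(a*x)^2)
      = a⁻¹ • ∫ u in (a*0)..(a*s), Real.sqrt (1 + 2*1*u^2) :=
    intervalIntegral.integral_comp_mul_left (fun u => Real.sqrt (1 + 2*1*u^2))
      (by positivity : a ≠ 0)
  rw [mul_zero] at key
  have h1 : Fk 1 (a*s) = a * ∫ x in (0:ℝ)..s, Real.sqrt (1 + 2*1*(a*x)^2) := by
    rw [Fk, key, smul_eq_mul, ← mul_assoc, mul_inv_cancel₀ ha0.ne', one_mul]
  have h2 : ∫ x in (0:ℝ)..s, Real.sqrt (1 + 2*1*(a*x)^2)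
      ≤ ∫ x in (0:ℝ)..s, a * Real.sqrt (1 + 2*1*x^2) := by
    apply intervalIntegral.integral_mono_on hs
    · exact (Real.continuous_sqrt.comp (by continuity)).intervalIntegrable 0 s
    · exact ((continuous_const.mul cont1)).intervalIntegrable 0 s
    · intro x _
      rw [show a * Real.sqrt (1 + 2*1*x^2) = Real.sqrt (a^2 * (1 + 2*1*x^2)) by
        rw [Real.sqrt_mul (sq_nonneg a), Real.sqrt_sq ha0.le]]
      apply Real.sqrt_le_sqrt; nlinarith [sq_nonneg x, sq_nonneg (a*x)]
  calc Fk 1 (a*s) = a * ∫ x in (0:ℝ)..s, Real.sqrt (1 + 2*1*(a*x)^2) := h1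
    _ ≤ a * (a * Fk 1 s) := by
        apply mul_le_mul_of_nonneg_left _ ha0.le
        rw [Fk, ← intervalIntegral.integral_const_mul]
        exact h2
    _ = a^2 * Fk 1 s := by ring

theorem stmt_18 (p : ℝ) (hp : 3 < p) (f₁ : ℝ → ℝ) (hf₁ : IsInvF 1 f₁)
    (g G : ℝ → ℝ)
    (hg : ∀ t, 0 < t → g t = (f₁ t) ^ (p + 1) / t)
    (hG : ∀ t, G t = ∫ s in (0:ℝ)..t, g s) :
    MeasureTheory.IntegrableOn (fun t => 1 / Real.sqrt (G t)) (Set.Ioi 1) := by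
  obtain ⟨hinv, hf⟩ := hf₁
  -- basic facts about f₁
  have hmono : ∀ s t : ℝ, 0 ≤ s → s ≤ t → f₁ s ≤ f₁ t := by
    intro s t hs hst
    by_contra h
    push_neg at h
    have := Fk_strictMono h
    rw [(hf s hs).2, (hf t (hs.trans hst)).2] at this
    linarith
  have hfle : ∀ t : ℝ, 0 ≤ t → f₁ t ≤ t := by
    intro t ht
    have := le_Fk (hf t ht).1
    rwa [(hf t ht).2] at this
  have hfpos : ∀ t : ℝ, 0 < t → 0 < f₁ t := by
    intro t ht
    rcases lt_or_eq_of_le (hf t ht.le).1 with h | h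
    · exact h
    · exfalso
      have := (hf t ht.le).2
      rw [← h, Fk_zero] at this; linarith
  have hflow : ∀ t : ℝ, 1 ≤ t → f₁ 1 * Real.sqrt t ≤ f₁ t := by
    intro t ht
    have hsq : 1 ≤ Real.sqrt t := by
      rw [show (1:ℝ) = Real.sqrt 1 from Real.sqrt_one.symm]
      exact Real.sqrt_le_sqrt ht
    have h1 : Fk 1 (Real.sqrt t * f₁ 1) ≤ t := by
      have := Fk_scale (hf 1 zero_le_one).1 hsq
      rw [(hf 1 zero_le_one).2, Real.sq_sqrt (by linarith : (0:ℝ) ≤ t), mul_one] at this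
      exact this
    by_contra h
    push_neg at h
    have := Fk_strictMono h
    rw [(hf t (by linarith)).2, mul_comm (f₁ 1)] at this
    linarith
  set C : ℝ := (f₁ 1) ^ (p+1) with hC
  have hCpos : 0 < C := Real.rpow_pos_of_pos (hfpos 1 one_pos) _
  set q : ℝ := (p+1)/2 with hq
  have hq2 : 2 ≤ q := by rw [hq]; linarith
  -- g nonneg
  have hgnn : ∀ t : ℝ, 0 < t → 0 ≤ g t := by
    intro t ht
    rw [hg t ht]
    exact div_nonneg (Real.rpow_nonneg (hf t ht.le).1 _) ht.le
  -- g lower bound on [1,∞)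
  have hglow : ∀ t : ℝ, 1 ≤ t → C * t ^ (q - 1) ≤ g t := by
    intro t ht
    have ht0 : (0:ℝ) < t := by linarith
    rw [hg t ht0]
    have h1 : (f₁ 1 * Real.sqrt t) ^ (p+1) ≤ (f₁ t) ^ (p+1) :=
      Real.rpow_le_rpow (mul_nonneg (hf 1 zero_le_one).1 (Real.sqrt_nonneg t))
        (hflow t ht) (by linarith)
    have h2 : (f₁ 1 * Real.sqrt t) ^ (p+1) = C * t ^ q := by
      rw [Real.mul_rpow (hfpos 1 one_pos).le (Real.sqrt_nonneg t), hC]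
      congr 1
      rw [Real.sqrt_eq_rpow, ← Real.rpow_mul ht0.le]
      congr 1
      rw [hq]; ring
    rw [le_div_iff₀ ht0]
    have htq : t ^ (q-1) * t = t ^ q := by
      nth_rewrite 2 [← Real.rpow_one t]
      rw [← Real.rpow_add ht0]
      norm_num
    calc C * t ^ (q-1) * t = C * (t ^ (q-1) * t) := by ring
      _ = C * t ^ q := by rw [htq]
      _ = (f₁ 1 * Real.sqrt t) ^ (p+1) := h2.symm
      _ ≤ (f₁ t) ^ (p+1) := h1
  -- integrability of g on (0, T]
  have hgint : ∀ T : ℝ, 0 < T → MeasureTheory.IntegrableOn g (Set.Ioc 0 T) := by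
    intro T hT
    have hm : Monotone (fun t : ℝ => f₁ (max t 0)) := fun a b hab =>
      hmono _ _ (le_max_right a 0) (max_le_max hab le_rfl)
    have hmeas : Measurable (fun t : ℝ => (f₁ (max t 0)) ^ (p+1) / t) := by
      have := hm.measurable
      exact (this.pow_const _).div measurable_id
    refine MeasureTheory.IntegrableOn.congr_fun
      (f := fun t : ℝ => (f₁ (max t 0)) ^ (p+1) / t) ?_ ?_ measurableSet_Ioc
    · apply MeasureTheory.Measure.integrableOn_of_bounded (M := T ^ p)
      · exact (measure_Ioc_lt_top).ne
      · exact hmeas.aestronglyMeasurable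
      · rw [MeasureTheory.ae_restrict_iff' measurableSet_Ioc]
        filter_upwards with t ht
        show ‖f₁ (max t 0) ^ (p+1) / t‖ ≤ T ^ p
        rw [max_eq_left ht.1.le, Real.norm_eq_abs,
          abs_of_nonneg (div_nonneg (Real.rpow_nonneg (hf t ht.1.le).1 _) ht.1.le)]
        have h1 : (f₁ t) ^ (p+1) ≤ t ^ (p+1) :=
          Real.rpow_le_rpow (hf t ht.1.le).1 (hfle t ht.1.le) (by linarith)
        have h2 : t ^ (p+1) / t = t ^ p := by
          nth_rewrite 2 [← Real.rpow_one t]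
          rw [← Real.rpow_sub ht.1]; norm_num
        have h3 : t ^ p ≤ T ^ p := Real.rpow_le_rpow ht.1.le ht.2 (by linarith)
        calc (f₁ t) ^ (p+1) / t ≤ t ^ (p+1) / t := by
              gcongr
              exact ht.1.le
          _ = t ^ p := h2
          _ ≤ T ^ p := h3
    · intro t ht
      show f₁ (max t 0) ^ (p+1) / t = g t
      rw [max_eq_left ht.1.le, ← hg t ht.1]
  have hgii : ∀ a b : ℝ, 0 ≤ a → a ≤ b → IntervalIntegrable g MeasureTheory.volume a b := by
    intro a b ha hab
    rcases eq_or_lt_of_le (ha.trans hab) with hb | hb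
    · have : a = 0 := le_antisymm (hab.trans hb.symm.le) ha
      rw [this, ← hb]
    · rw [intervalIntegrable_iff_integrableOn_Ioc_of_le hab]
      exact (hgint b hb).mono_set (Set.Ioc_subset_Ioc ha le_rfl)
  -- interval integrals of g over [a,b] ⊆ [0,∞) are nonneg
  have hzero_ae : ∀ᵐ t : ℝ, t ≠ (0:ℝ) := by
    rw [MeasureTheory.ae_iff]
    simpa using Real.volume_singleton (a := 0)
  have hgintnn : ∀ a b : ℝ, 0 ≤ a → a ≤ b → 0 ≤ ∫ s in a..b, g s := by
    intro a b ha hab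
    apply intervalIntegral.integral_nonneg_of_ae_restrict hab
    filter_upwards [MeasureTheory.ae_restrict_mem measurableSet_Icc,
      MeasureTheory.ae_restrict_of_ae hzero_ae] with t ht ht0
    exact hgnn t (lt_of_le_of_ne (ha.trans ht.1) (Ne.symm ht0))
  -- G b = G a + ∫ a..b for 0 ≤ a ≤ b
  have hGsplit : ∀ a b : ℝ, 0 ≤ a → a ≤ b → G b = G a + ∫ s in a..b, g s := by
    intro a b ha hab
    rw [hG a, hG b,
      ← intervalIntegral.integral_add_adjacent_intervals (hgii 0 a le_rfl ha) (hgii a b ha hab)]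
  -- positive lower bound for G on [1,∞)
  set c₀ : ℝ := (f₁ (1/2)) ^ (p+1) / 2 with hc₀
  have hc₀pos : 0 < c₀ :=
    div_pos (Real.rpow_pos_of_pos (hfpos (1/2) (by norm_num)) _) two_pos
  have hGlow1 : ∀ t : ℝ, 1 ≤ t → c₀ ≤ G t := by
    intro t ht
    have hmid : c₀ ≤ ∫ s in (1/2:ℝ)..1, g s := by
      have hbound : ∀ s ∈ Set.Icc (1/2:ℝ) 1, (f₁ (1/2)) ^ (p+1) ≤ g s := by
        intro s hs
        have hs0 : (0:ℝ) < s := by linarith [hs.1]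
        rw [hg s hs0]
        have h1 : (f₁ (1/2)) ^ (p+1) ≤ (f₁ s) ^ (p+1) :=
          Real.rpow_le_rpow (hf (1/2) (by norm_num)).1 (hmono _ _ (by norm_num) hs.1)
            (by linarith)
        rw [le_div_iff₀ hs0]
        calc (f₁ (1/2)) ^ (p+1) * s ≤ (f₁ (1/2)) ^ (p+1) * 1 :=
              mul_le_mul_of_nonneg_left hs.2 (Real.rpow_nonneg (hf _ (by norm_num)).1 _)
          _ ≤ (f₁ s) ^ (p+1) := by rw [mul_one]; exact h1
      have hcmp := intervalIntegral.integral_mono_on (by norm_num : (1/2:ℝ) ≤ 1)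
        intervalIntegrable_const (hgii (1/2) 1 (by norm_num) (by norm_num)) hbound
      have : ∫ _ in (1/2:ℝ)..1, (f₁ (1/2)) ^ (p+1) = c₀ := by
        rw [intervalIntegral.integral_const, hc₀]
        norm_num
        ring
      linarith
    have e1 := hGsplit 0 (1/2) le_rfl (by norm_num)
    have e2 := hGsplit (1/2) 1 (by norm_num) (by norm_num)
    have e3 := hGsplit 1 t zero_le_one ht
    have h0 : G 0 = 0 := by rw [hG 0]; simp
    have n1 := hgintnn 0 (1/2) le_rfl (by norm_num)
    have n3 := hgintnn 1 t zero_le_one ht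
    linarith
  -- growth lower bound for G on [2,∞)
  set c₂ : ℝ := C / (2*q) with hc₂
  have hc₂pos : 0 < c₂ := by rw [hc₂]; positivity
  have hGlow2 : ∀ t : ℝ, 2 ≤ t → c₂ * t ^ q ≤ G t := by
    intro t ht
    have ht1 : (1:ℝ) ≤ t := by linarith
    have htail : C * (t ^ q - 1) / q ≤ ∫ s in (1:ℝ)..t, g s := by
      have hcmp : ∫ s in (1:ℝ)..t, C * s ^ (q-1) ≤ ∫ s in (1:ℝ)..t, g s := by
        apply intervalIntegral.integral_mono_on ht1 ?_ (hgii 1 t zero_le_one ht1)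
        · intro s hs; exact hglow s hs.1
        · exact (intervalIntegral.intervalIntegrable_rpow' (by linarith)).const_mul C
      have hval : ∫ s in (1:ℝ)..t, C * s ^ (q-1) = C * (t ^ q - 1) / q := by
        rw [intervalIntegral.integral_const_mul, integral_rpow (Or.inl (by linarith))]
        rw [sub_add_cancel, Real.one_rpow]
        field_simp
      linarith [hval.ge.trans hcmp]
    have e3 := hGsplit 1 t zero_le_one ht1
    have hG1 : 0 ≤ G 1 := le_trans hc₀pos.le (hGlow1 1 le_rfl)
    have htq2 : (2:ℝ) ≤ t ^ q := by
      calc (2:ℝ) = 2 ^ (1:ℝ) := (Real.rpow_one 2).symm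
        _ ≤ 2 ^ q := Real.rpow_le_rpow_of_exponent_le one_le_two (by linarith)
        _ ≤ t ^ q := Real.rpow_le_rpow (by norm_num) ht (by linarith)
    have hkey : c₂ * t ^ q ≤ C * (t ^ q - 1) / q := by
      rw [hc₂, div_mul_eq_mul_div, div_le_div_iff₀ (by linarith) (by linarith)]
      nlinarith [mul_nonneg (mul_nonneg hCpos.le (by linarith : (0:ℝ) ≤ q))
        (by linarith : (0:ℝ) ≤ t ^ q - 2)]
    linarith
  -- monotonicity of G on [1,∞), measurability
  have hGmono : ∀ s t : ℝ, 1 ≤ s → s ≤ t → G s ≤ G t := by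
    intro s t hs hst
    have h1 := hGsplit s t (by linarith) hst
    have h2 := hgintnn s t (by linarith) hst
    linarith
  have hmeasG : Measurable fun t : ℝ => 1 / Real.sqrt (G (max 1 t)) := by
    have hm : Monotone fun t : ℝ => G (max 1 t) := fun a b hab =>
      hGmono _ _ (le_max_left 1 a) (max_le_max le_rfl hab)
    have h2 : Measurable fun t : ℝ => (Real.sqrt (G (max 1 t)))⁻¹ :=
      (Real.continuous_sqrt.measurable.comp hm.measurable).inv
    simpa [one_div] using h2
  have heq : ∀ t : ℝ, 1 < t → 1 / Real.sqrt (G (max 1 t)) = 1 / Real.sqrt (G t) := by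
    intro t ht
    rw [max_eq_right ht.le]
  -- split the domain
  have hsplit : Set.Ioi (1:ℝ) = Set.Ioc 1 2 ∪ Set.Ioi 2 :=
    (Set.Ioc_union_Ioi_eq_Ioi (by norm_num)).symm
  rw [hsplit]
  apply MeasureTheory.IntegrableOn.union
  · -- bounded part on (1,2]
    refine MeasureTheory.IntegrableOn.congr_fun
      (f := fun t : ℝ => 1 / Real.sqrt (G (max 1 t))) ?_
      (fun t ht => heq t ht.1) measurableSet_Ioc
    apply MeasureTheory.Measure.integrableOn_of_bounded (M := 1 / Real.sqrt c₀)
    · exact (measure_Ioc_lt_top).ne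
    · exact hmeasG.aestronglyMeasurable
    · rw [MeasureTheory.ae_restrict_iff' measurableSet_Ioc]
      filter_upwards with t ht
      show ‖1 / Real.sqrt (G (max 1 t))‖ ≤ 1 / Real.sqrt c₀
      rw [max_eq_right ht.1.le, Real.norm_eq_abs, abs_of_nonneg (by positivity)]
      apply one_div_le_one_div_of_le (Real.sqrt_pos.mpr hc₀pos)
      exact Real.sqrt_le_sqrt (hGlow1 t ht.1.le)
  · -- tail part on (2,∞)
    refine MeasureTheory.IntegrableOn.congr_fun
      (f := fun t : ℝ => 1 / Real.sqrt (G (max 1 t))) ?_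
      (fun t ht => heq t (by linarith [Set.mem_Ioi.mp ht])) measurableSet_Ioi
    have hdom : MeasureTheory.IntegrableOn
        (fun t : ℝ => (1 / Real.sqrt c₂) * t ^ (-(q/2))) (Set.Ioi 2) := by
      apply MeasureTheory.Integrable.const_mul
      exact integrableOn_Ioi_rpow_of_lt (by linarith) (by norm_num)
    apply MeasureTheory.Integrable.mono' hdom hmeasG.aestronglyMeasurable.restrict
    rw [MeasureTheory.ae_restrict_iff' measurableSet_Ioi]
    filter_upwards with t ht
    have ht2 : (2:ℝ) < t := ht
    have ht0 : (0:ℝ) < t := by linarith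
    show ‖1 / Real.sqrt (G (max 1 t))‖ ≤ (1 / Real.sqrt c₂) * t ^ (-(q/2))
    rw [max_eq_right (by linarith : (1:ℝ) ≤ t), Real.norm_eq_abs,
      abs_of_nonneg (by positivity)]
    have hGt : c₂ * t ^ q ≤ G t := hGlow2 t ht2.le
    have hden : Real.sqrt (c₂ * t ^ q) = Real.sqrt c₂ * t ^ (q/2) := by
      rw [Real.sqrt_mul hc₂pos.le, Real.sqrt_eq_rpow (t ^ q), ← Real.rpow_mul ht0.le,
        show q * (1/2) = q/2 by ring]
    have hpos : 0 < Real.sqrt c₂ * t ^ (q/2) := by positivity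
    calc 1 / Real.sqrt (G t) ≤ 1 / Real.sqrt (c₂ * t ^ q) := by
          apply one_div_le_one_div_of_le (by positivity)
          exact Real.sqrt_le_sqrt hGt
      _ = 1 / (Real.sqrt c₂ * t ^ (q/2)) := by rw [hden]
      _ = (1 / Real.sqrt c₂) * t ^ (-(q/2)) := by
          rw [Real.rpow_neg ht0.le]
          field_simp
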